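/- An indexed forest F with support in the positive integers is a single indexed linear tree (its internal nodes form a path) if and only if the support of the vector c(F) is an interval of positive integers, if and only if the left support of F (the set of canonical labels of nodes whose left child is a leaf) is an interval of positive integers. -/

import Mathlib

/-- Plane binary trees. `leaf` is a leaf, `node l r` an internal node. -/
inductive BT where
  | leaf : BT
  | node : BT → BT → BT
deriving DecidableEq

/-- Number of internal nodes. -/
def BT.size : BT → ℕ
  | .leaf => 0
  | .node l r => l.size + r.size + 1

/-- Multiset of values `ρ_F(v)` (canonical label of the leftmost descendant,
reached by following left edges) over the internal nodes of a tree whose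
inorder canonical labels start at `a`. -/
def BT.rhoMS : BT → ℤ → Multiset ℤ
  | .leaf, _ => 0
  | .node l r, a => a ::ₘ (l.rhoMS a + r.rhoMS (a + l.size + 1))

/-- Multiset of canonical labels of internal nodes whose left child is a leaf
("left support"). -/
def BT.lsuppMS : BT → ℤ → Multiset ℤ
  | .leaf, _ => 0
  | .node l r, a =>
      (if l = BT.leaf then ({a} : Multiset ℤ) else 0) + l.lsuppMS a
        + r.lsuppMS (a + l.size + 1)

/-- The flagged generating polynomial of a binary tree with inorder labels
starting at `a`, where every label is at least `lo` (lower bound transmitted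
from the parent), at most the `ρ`-value of the node, labels weakly increase
down left edges and strictly increase down right edges. The variables are
`x_1, x_2, …` (the variable `X 0` is unused). -/
noncomputable def BT.polyAux : BT → ℤ → ℕ → MvPolynomial ℕ ℚ
  | .leaf, _, _ => 1
  | .node l r, a, lo =>
      ∑ k ∈ Finset.Icc lo a.toNat,
        MvPolynomial.X k * l.polyAux a k * r.polyAux (a + l.size + 1) (k + 1)

/-- The forest polynomial of a single indexed tree with support starting at `a`. -/
noncomputable def BT.poly (t : BT) (a : ℤ) : MvPolynomial ℕ ℚ := t.polyAux a 1

/-- An indexed forest: a list of binary trees together with the starting points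
of their supports, the supports being maximal intervals (consecutive supports
leave a gap of at least one integer). -/
structure IndexedForest where
  trees : List (ℤ × BT)
  nonempty : ∀ p ∈ trees, p.2 ≠ BT.leaf
  gaps : trees.Chain' (fun p q => p.1 + (p.2.size : ℤ) + 1 ≤ q.1)

/-- The support of an indexed forest, as a set of integers. -/
def IndexedForest.Supp (F : IndexedForest) : Set ℤ :=
  {i | ∃ p ∈ F.trees, p.1 ≤ i ∧ i < p.1 + (p.2.size : ℤ)}

/-- The multiset of `ρ_F`-values of all internal nodes of `F`. -/
def IndexedForest.rhoMS (F : IndexedForest) : Multiset ℤ :=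
  (F.trees.map (fun p => p.2.rhoMS p.1)).sum

/-- The `ℕ`-vector `c(F)`: `c_i` counts internal nodes with `ρ_F`-value `i`. -/
def cOf (F : IndexedForest) : ℤ → ℕ := fun i => F.rhoMS.count i

/-- The multiset of left-support labels of `F`. -/
def IndexedForest.lsuppMS (F : IndexedForest) : Multiset ℤ :=
  (F.trees.map (fun p => p.2.lsuppMS p.1)).sum

/-- Forest polynomial of a list of located trees. -/
noncomputable def polyL (ts : List (ℤ × BT)) : MvPolynomial ℕ ℚ :=
  (ts.map (fun p => p.2.poly p.1)).prod

/-- The forest polynomial of an indexed forest. -/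
noncomputable def IndexedForest.poly (F : IndexedForest) : MvPolynomial ℕ ℚ :=
  polyL F.trees

/-- Number of internal nodes of a forest. -/
def IndexedForest.size (F : IndexedForest) : ℕ :=
  (F.trees.map (fun p => p.2.size)).sum

/-- A linear binary tree: the internal nodes form a path (every internal node
has at most one internal-node child). -/
def BT.linear : BT → Prop
  | .leaf => True
  | .node l r => (l = BT.leaf ∨ r = BT.leaf) ∧ l.linear ∧ r.linear

section AuxLemmas

lemma BT.size_pos {t : BT} (h : t ≠ BT.leaf) : 1 ≤ t.size := by
  cases t with
  | leaf => exact absurd rfl h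
  | node l r => simp [BT.size]

lemma BT.rhoMS_bounds : ∀ (t : BT) (a x : ℤ), x ∈ t.rhoMS a →
    a ≤ x ∧ x < a + (t.size : ℤ)
  | .leaf, a, x => by simp [BT.rhoMS]
  | .node l r, a, x => by
    simp only [BT.rhoMS, Multiset.mem_cons, Multiset.mem_add]
    rintro (rfl | h | h)
    · simp only [BT.size]; push_cast; omega
    · have := BT.rhoMS_bounds l a x h
      simp only [BT.size]; push_cast; omega
    · have := BT.rhoMS_bounds r (a + l.size + 1) x h
      simp only [BT.size]; push_cast at this ⊢; omega

lemma BT.lsuppMS_bounds : ∀ (t : BT) (a x : ℤ), x ∈ t.lsuppMS a →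
    a ≤ x ∧ x < a + (t.size : ℤ)
  | .leaf, a, x => by simp [BT.lsuppMS]
  | .node l r, a, x => by
    simp only [BT.lsuppMS, Multiset.mem_add]
    rintro ((h | h) | h)
    · have hx : x = a := by
        by_cases hl : l = BT.leaf <;> simp [hl] at h
        exact h
      subst hx
      simp only [BT.size]; push_cast; omega
    · have := BT.lsuppMS_bounds l a x h
      simp only [BT.size]; push_cast; omega
    · have := BT.lsuppMS_bounds r (a + l.size + 1) x h
      simp only [BT.size]; push_cast at this ⊢; omega

lemma BT.root_mem : ∀ (t : BT), t ≠ BT.leaf → ∀ a, a ∈ t.rhoMS a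
  | .leaf, h, _ => absurd rfl h
  | .node l r, _, a => by simp [BT.rhoMS]

lemma BT.lsupp_nonempty : ∀ (t : BT), t ≠ BT.leaf → ∀ a, ∃ x, x ∈ t.lsuppMS a := by
  intro t
  induction t with
  | leaf => intro h; exact absurd rfl h
  | node l r ihl ihr =>
    intro _ a
    by_cases hl : l = BT.leaf
    · exact ⟨a, by simp [BT.lsuppMS, hl]⟩
    · obtain ⟨x, hx⟩ := ihl hl a
      exact ⟨x, by simp only [BT.lsuppMS, Multiset.mem_add]; tauto⟩

/-- A multiset of integers which cannot be the set of points of an interval. -/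
def Gapped (S : Multiset ℤ) : Prop :=
  ∃ m x y, x ∈ S ∧ y ∈ S ∧ x < m ∧ m < y ∧ m ∉ S

lemma BT.rho_gapped : ∀ (t : BT) (a : ℤ), ¬ t.linear → Gapped (t.rhoMS a) := by
  intro t
  induction t with
  | leaf => intro a h; exact absurd trivial h
  | node l r ihl ihr =>
    intro a h
    by_cases hl : l.linear
    · by_cases hr : r.linear
      · have hne : l ≠ BT.leaf ∧ r ≠ BT.leaf := by
          constructor <;> rintro rfl <;> exact h ⟨by tauto, hl, hr⟩
        have hls := BT.size_pos hne.1
        refine ⟨a + l.size, a, a + l.size + 1, ?_, ?_, by push_cast; omega, by omega, ?_⟩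
        · simp [BT.rhoMS]
        · simp only [BT.rhoMS, Multiset.mem_cons, Multiset.mem_add]
          exact Or.inr (Or.inr (BT.root_mem r hne.2 _))
        · simp only [BT.rhoMS, Multiset.mem_cons, Multiset.mem_add]
          rintro (heq | hm | hm)
          · omega
          · have := BT.rhoMS_bounds l a _ hm; omega
          · have := BT.rhoMS_bounds r (a + l.size + 1) _ hm; omega
      · obtain ⟨m, x, y, hx, hy, h1, h2, hm⟩ := ihr (a + l.size + 1) hr
        have hbx := BT.rhoMS_bounds r _ _ hx
        have hby := BT.rhoMS_bounds r _ _ hy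
        refine ⟨m, x, y, ?_, ?_, h1, h2, ?_⟩
        · simp only [BT.rhoMS, Multiset.mem_cons, Multiset.mem_add]; tauto
        · simp only [BT.rhoMS, Multiset.mem_cons, Multiset.mem_add]; tauto
        · simp only [BT.rhoMS, Multiset.mem_cons, Multiset.mem_add]
          rintro (heq | hmm | hmm)
          · omega
          · have := BT.rhoMS_bounds l a _ hmm; omega
          · exact hm hmm
    · obtain ⟨m, x, y, hx, hy, h1, h2, hm⟩ := ihl a hl
      have hbx := BT.rhoMS_bounds l _ _ hx
      have hby := BT.rhoMS_bounds l _ _ hy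
      refine ⟨m, x, y, ?_, ?_, h1, h2, ?_⟩
      · simp only [BT.rhoMS, Multiset.mem_cons, Multiset.mem_add]; tauto
      · simp only [BT.rhoMS, Multiset.mem_cons, Multiset.mem_add]; tauto
      · simp only [BT.rhoMS, Multiset.mem_cons, Multiset.mem_add]
        rintro (heq | hmm | hmm)
        · omega
        · exact hm hmm
        · have := BT.rhoMS_bounds r (a + l.size + 1) _ hmm; omega

lemma BT.lsupp_gapped : ∀ (t : BT) (a : ℤ), ¬ t.linear → Gapped (t.lsuppMS a) := by
  intro t
  induction t with
  | leaf => intro a h; exact absurd trivial h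
  | node l r ihl ihr =>
    intro a h
    by_cases hl : l.linear
    · by_cases hr : r.linear
      · have hne : l ≠ BT.leaf ∧ r ≠ BT.leaf := by
          constructor <;> rintro rfl <;> exact h ⟨by tauto, hl, hr⟩
        obtain ⟨x, hx⟩ := BT.lsupp_nonempty l hne.1 a
        obtain ⟨y, hy⟩ := BT.lsupp_nonempty r hne.2 (a + l.size + 1)
        have hbx := BT.lsuppMS_bounds l _ _ hx
        have hby := BT.lsuppMS_bounds r _ _ hy
        refine ⟨a + l.size, x, y, ?_, ?_, by omega, by omega, ?_⟩
        · simp only [BT.lsuppMS, Multiset.mem_add]; tauto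
        · simp only [BT.lsuppMS, Multiset.mem_add]; tauto
        · simp only [BT.lsuppMS, Multiset.mem_add]
          rintro ((hmm | hmm) | hmm)
          · simp [hne.1] at hmm
          · have := BT.lsuppMS_bounds l a _ hmm; omega
          · have := BT.lsuppMS_bounds r (a + l.size + 1) _ hmm; omega
      · obtain ⟨m, x, y, hx, hy, h1, h2, hm⟩ := ihr (a + l.size + 1) hr
        have hbx := BT.lsuppMS_bounds r _ _ hx
        have hby := BT.lsuppMS_bounds r _ _ hy
        refine ⟨m, x, y, ?_, ?_, h1, h2, ?_⟩
        · simp only [BT.lsuppMS, Multiset.mem_add]; tauto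
        · simp only [BT.lsuppMS, Multiset.mem_add]; tauto
        · simp only [BT.lsuppMS, Multiset.mem_add]
          rintro ((hmm | hmm) | hmm)
          · have hma : m = a := by
              by_cases hll : l = BT.leaf <;> simp [hll] at hmm
              exact hmm
            have hls : (0:ℤ) ≤ (l.size : ℤ) := by positivity
            omega
          · have := BT.lsuppMS_bounds l a _ hmm; omega
          · exact hm hmm
    · have hlne : l ≠ BT.leaf := by rintro rfl; exact hl trivial
      obtain ⟨m, x, y, hx, hy, h1, h2, hm⟩ := ihl a hl
      have hbx := BT.lsuppMS_bounds l _ _ hx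
      have hby := BT.lsuppMS_bounds l _ _ hy
      refine ⟨m, x, y, ?_, ?_, h1, h2, ?_⟩
      · simp only [BT.lsuppMS, Multiset.mem_add]; tauto
      · simp only [BT.lsuppMS, Multiset.mem_add]; tauto
      · simp only [BT.lsuppMS, Multiset.mem_add]
        rintro ((hmm | hmm) | hmm)
        · simp [hlne] at hmm
        · exact hm hmm
        · have := BT.lsuppMS_bounds r (a + l.size + 1) _ hmm; omega

lemma BT.rho_interval : ∀ (t : BT) (a : ℤ), t.linear → t ≠ BT.leaf →
    ∃ b, a ≤ b ∧ ∀ x, x ∈ t.rhoMS a ↔ a ≤ x ∧ x ≤ b := by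
  intro t
  induction t with
  | leaf => intro a _ h; exact absurd rfl h
  | node l r ihl ihr =>
    intro a hlin _
    obtain ⟨hor, hll, hrl⟩ := hlin
    rcases hor with rfl | rfl
    · by_cases hr : r = BT.leaf
      · subst hr
        exact ⟨a, le_refl a, by intro x; simp [BT.rhoMS]; omega⟩
      · obtain ⟨b, hab, hiff⟩ := ihr (a + 1) hrl hr
        refine ⟨b, by omega, ?_⟩
        intro x
        have h1 : a + (BT.leaf.size : ℤ) + 1 = a + 1 := by simp [BT.size]
        simp only [BT.rhoMS, h1, Multiset.mem_cons, Multiset.mem_add,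
          Multiset.notMem_zero, false_or, hiff x]
        omega
    · by_cases hl : l = BT.leaf
      · subst hl
        exact ⟨a, le_refl a, by intro x; simp [BT.rhoMS]; omega⟩
      · obtain ⟨b, hab, hiff⟩ := ihl a hll hl
        refine ⟨b, hab, ?_⟩
        intro x
        simp only [BT.rhoMS, Multiset.mem_cons, Multiset.mem_add,
          Multiset.notMem_zero, or_false, hiff x]
        omega

lemma BT.lsupp_interval : ∀ (t : BT) (a : ℤ), t.linear → t ≠ BT.leaf →
    ∃ b, a ≤ b ∧ ∀ x, x ∈ t.lsuppMS a ↔ a ≤ x ∧ x ≤ b := by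
  intro t
  induction t with
  | leaf => intro a _ h; exact absurd rfl h
  | node l r ihl ihr =>
    intro a hlin _
    obtain ⟨hor, hll, hrl⟩ := hlin
    by_cases hl : l = BT.leaf
    · subst hl
      by_cases hr : r = BT.leaf
      · subst hr
        exact ⟨a, le_refl a, by intro x; simp [BT.lsuppMS]; omega⟩
      · obtain ⟨b, hab, hiff⟩ := ihr (a + 1) hrl hr
        refine ⟨b, by omega, ?_⟩
        intro x
        have h1 : a + (BT.leaf.size : ℤ) + 1 = a + 1 := by simp [BT.size]
        simp only [BT.lsuppMS, h1, if_pos rfl, Multiset.mem_add,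
          Multiset.mem_singleton, Multiset.notMem_zero, or_false, hiff x,
          if_true]
        omega
    · have hr : r = BT.leaf := by tauto
      subst hr
      obtain ⟨b, hab, hiff⟩ := ihl a hll hl
      refine ⟨b, hab, ?_⟩
      intro x
      simp only [BT.lsuppMS, if_neg hl, Multiset.mem_add, Multiset.notMem_zero,
        or_false, false_or, zero_add, BT.lsuppMS, hiff x]

lemma mem_sum_map {α : Type*} (ts : List α) (f : α → Multiset ℤ) (x : ℤ) :
    x ∈ (ts.map f).sum ↔ ∃ p ∈ ts, x ∈ f p := by
  induction ts with
  | nil => simp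
  | cons h t ih => simp [ih]

lemma chain_start_lt (R : ℤ × BT → ℤ × BT → Prop)
    (hR : ∀ u v, R u v → u.1 + (u.2.size : ℤ) + 1 ≤ v.1) :
    ∀ (l : List (ℤ × BT)) (u : ℤ × BT), (u :: l).Chain' R →
      ∀ v ∈ l, u.1 + (u.2.size : ℤ) < v.1 := by
  intro l
  induction l with
  | nil => intro u _ v hv; simp at hv
  | cons w l ih =>
    intro u hc v hv
    have h1 : R u w := (List.isChain_cons_cons.mp hc).1
    have h2 := (List.isChain_cons_cons.mp hc).2
    have huw := hR u w h1
    rcases List.mem_cons.mp hv with rfl | hv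
    · omega
    · have := ih w h2 v hv
      have hws : (0:ℤ) ≤ (w.2.size : ℤ) := by positivity
      omega

lemma master (F : IndexedForest) (hpos : ∀ i ∈ F.Supp, 1 ≤ i)
    (g : BT → ℤ → Multiset ℤ)
    (bounds : ∀ t a x, x ∈ g t a → a ≤ x ∧ x < a + (t.size : ℤ))
    (hne : ∀ t, t ≠ BT.leaf → ∀ a, ∃ x, x ∈ g t a)
    (hgap : ∀ t a, ¬ t.linear → Gapped (g t a))
    (hint : ∀ t a, t.linear → t ≠ BT.leaf → ∃ b, a ≤ b ∧ ∀ x, x ∈ g t a ↔ a ≤ x ∧ x ≤ b) :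
    (∃ a t, F.trees = [(a, t)] ∧ t.linear) ↔
      (∃ a b : ℤ, 1 ≤ a ∧ a ≤ b ∧
        {i : ℤ | i ∈ (F.trees.map (fun p => g p.2 p.1)).sum} = Set.Icc a b) := by
  constructor
  · rintro ⟨a, t, hF, hlin⟩
    have htne : t ≠ BT.leaf := F.nonempty (a, t) (by rw [hF]; simp)
    obtain ⟨b, hab, hiff⟩ := hint t a hlin htne
    have hts := BT.size_pos htne
    refine ⟨a, b, ?_, hab, ?_⟩
    · exact hpos a ⟨(a, t), by rw [hF]; simp, le_refl a, by push_cast; omega⟩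
    · ext x
      simp only [Set.mem_setOf_eq, hF, List.map_cons, List.map_nil, List.sum_cons,
        List.sum_nil, add_zero, hiff x, Set.mem_Icc]
  · rintro ⟨a, b, ha1, hab, hset⟩
    have key : ∀ x, x ∈ (F.trees.map (fun p => g p.2 p.1)).sum ↔ a ≤ x ∧ x ≤ b := by
      intro x
      rw [← Set.mem_Icc, ← hset]; rfl
    have noGap : ¬ Gapped ((F.trees.map (fun p => g p.2 p.1)).sum) := by
      rintro ⟨m, x, y, hx, hy, h1, h2, hm⟩
      exact hm ((key m).2 ⟨le_trans ((key x).1 hx).1 h1.le,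
        le_trans h2.le ((key y).1 hy).2⟩)
    match hcase : F.trees with
    | [] =>
      exfalso
      have h := (key a).2 ⟨le_refl a, hab⟩
      rw [hcase] at h
      simp at h
    | [p] =>
      have hpne : p.2 ≠ BT.leaf := F.nonempty p (by rw [hcase]; simp)
      have hplin : p.2.linear := by
        by_contra hnl
        obtain ⟨m, x, y, hx, hy, h1, h2, hm⟩ := hgap p.2 p.1 hnl
        refine noGap ⟨m, x, y, ?_, ?_, h1, h2, ?_⟩ <;>
          rw [hcase] <;>
          simp only [List.map_cons, List.map_nil, List.sum_cons, List.sum_nil, add_zero]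
        · exact hx
        · exact hy
        · exact hm
      exact ⟨p.1, p.2, by simp [hcase], hplin⟩
    | p :: q :: rest =>
      exfalso
      have hchain : (p :: q :: rest).Chain'
          (fun u v : ℤ × BT => u.1 + (u.2.size : ℤ) + 1 ≤ v.1) := by
        rw [← hcase]; exact F.gaps
      have hlt : ∀ v ∈ q :: rest, p.1 + (p.2.size : ℤ) < v.1 :=
        chain_start_lt _ (fun _ _ h => h) (q :: rest) p hchain
      have hpne : p.2 ≠ BT.leaf := F.nonempty p (by rw [hcase]; simp)
      have hqne : q.2 ≠ BT.leaf := F.nonempty q (by rw [hcase]; simp)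
      obtain ⟨x, hx⟩ := hne p.2 hpne p.1
      obtain ⟨y, hy⟩ := hne q.2 hqne q.1
      have hbx := bounds p.2 p.1 x hx
      have hby := bounds q.2 q.1 y hy
      have hq1 := hlt q (by simp)
      refine noGap ⟨p.1 + (p.2.size : ℤ), x, y, ?_, ?_, by omega, by omega, ?_⟩
      · rw [hcase, mem_sum_map]
        exact ⟨p, by simp, hx⟩
      · rw [hcase, mem_sum_map]
        exact ⟨q, by simp, hy⟩
      · rw [hcase, mem_sum_map]
        rintro ⟨r, hr, hmr⟩
        have hbr := bounds r.2 r.1 _ hmr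
        rcases List.mem_cons.mp hr with rfl | hr
        · omega
        · have := hlt r hr
          omega

end AuxLemmas

/-- a positively supported indexed forest `F` is a single indexed
linear tree iff the support of `c(F)` is a (nonempty) interval of positive
integers, iff the left support of `F` is a (nonempty) interval of positive
integers. -/
theorem linear_tree_characterization (F : IndexedForest)
    (hpos : ∀ i ∈ F.Supp, 1 ≤ i) :
    ((∃ a t, F.trees = [(a, t)] ∧ t.linear) ↔
      (∃ a b : ℤ, 1 ≤ a ∧ a ≤ b ∧ {i : ℤ | cOf F i ≠ 0} = Set.Icc a b)) ∧
    ((∃ a t, F.trees = [(a, t)] ∧ t.linear) ↔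
      (∃ a b : ℤ, 1 ≤ a ∧ a ≤ b ∧ {i : ℤ | i ∈ F.lsuppMS} = Set.Icc a b)) := by
  constructor
  · have h := master F hpos BT.rhoMS BT.rhoMS_bounds
      (fun t ht a => ⟨a, BT.root_mem t ht a⟩) BT.rho_gapped BT.rho_interval
    have hrw : {i : ℤ | cOf F i ≠ 0}
        = {i : ℤ | i ∈ (F.trees.map (fun p => p.2.rhoMS p.1)).sum} := by
      ext i
      simp only [Set.mem_setOf_eq, cOf, IndexedForest.rhoMS, ne_eq,
        Multiset.count_eq_zero, not_not]
    rw [hrw]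
    exact h
  · have h := master F hpos BT.lsuppMS BT.lsuppMS_bounds
      BT.lsupp_nonempty BT.lsupp_gapped BT.lsupp_interval
    have hrw : {i : ℤ | i ∈ F.lsuppMS}
        = {i : ℤ | i ∈ (F.trees.map (fun p => p.2.lsuppMS p.1)).sum} := rfl
    rw [hrw]
    exact h
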